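/- Consider a CMJ branching count where P_k(τ) denotes the expected number of generation-k processes born before time τ, satisfying P_0(τ) = 1 for τ ≥ 0, P_k(τ) = 0 for τ < 0, and P_k(τ) = α·E[P_{k-1}(τ - U)] for k ≥ 1 where U is uniform on [0,1]. Then P_k(τ) ≤ (ατ)^k / k! for all integers k ≥ 0 and all τ ≥ 0. -/

import Mathlib

open intervalIntegral MeasureTheory

theorem Pk_bound (α : ℝ) (hα : 0 < α) (P : ℕ → ℝ → ℝ)
    (hP0 : ∀ τ : ℝ, 0 ≤ τ → P 0 τ = 1)
    (hPneg : ∀ (k : ℕ) (τ : ℝ), τ < 0 → P k τ = 0)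
    (hPnonneg : ∀ (k : ℕ) (τ : ℝ), 0 ≤ P k τ)
    (hPrec : ∀ (k : ℕ) (τ : ℝ), 0 ≤ τ →
      P (k + 1) τ = α * ∫ u in (0 : ℝ)..1, P k (τ - u)) :
    ∀ (k : ℕ) (τ : ℝ), 0 ≤ τ → P k τ ≤ (α * τ) ^ k / Nat.factorial k := by
  intro k
  induction k with
  | zero => intro τ hτ; simp [hP0 τ hτ]
  | succ k ih =>
    intro τ hτ
    have hbnn : 0 ≤ (α * τ) ^ (k + 1) / Nat.factorial (k + 1) :=
      div_nonneg (pow_nonneg (mul_nonneg hα.le hτ) _) (Nat.cast_nonneg _)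
    rw [hPrec k τ hτ]
    by_cases h : IntervalIntegrable (fun u => P k (τ - u)) volume 0 1
    · set m := min 1 τ with hm
      have hm0 : 0 ≤ m := le_min one_pos.le hτ
      have hm1 : m ≤ 1 := min_le_left _ _
      have hmτ : m ≤ τ := min_le_right _ _
      have h1 : IntervalIntegrable (fun u => P k (τ - u)) volume 0 m :=
        h.mono_set (by rw [Set.uIcc_of_le hm0, Set.uIcc_of_le zero_le_one]
                       exact Set.Icc_subset_Icc le_rfl hm1)
      have h2 : IntervalIntegrable (fun u => P k (τ - u)) volume m 1 :=
        h.mono_set (by rw [Set.uIcc_of_le hm1, Set.uIcc_of_le zero_le_one]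
                       exact Set.Icc_subset_Icc hm0 le_rfl)
      have hsplit : (∫ u in (0:ℝ)..1, P k (τ - u)) =
          (∫ u in (0:ℝ)..m, P k (τ - u)) + ∫ u in m..1, P k (τ - u) :=
        (integral_add_adjacent_intervals h1 h2).symm
      have hI2 : (∫ u in m..1, P k (τ - u)) = 0 := by
        have hz : ∀ u ∈ Set.uIoc m 1, P k (τ - u) = 0 := by
          intro u hu
          rw [Set.uIoc_of_le hm1] at hu
          rcases le_or_gt 1 τ with hτ1 | hτ1
          · have hm' : m = 1 := min_eq_left hτ1
            exact absurd hu.2 (not_le.mpr (hm' ▸ hu.1))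
          · have hm' : m = τ := min_eq_right hτ1.le
            exact hPneg k _ (by have := hu.1; rw [hm'] at this; linarith)
        calc (∫ u in m..1, P k (τ - u)) = ∫ u in m..1, (0:ℝ) := by
              apply intervalIntegral.integral_congr_ae
              exact ae_of_all _ fun u hu => hz u hu
          _ = 0 := by simp
      set c : ℝ := α ^ k / (Nat.factorial k : ℝ) with hc
      have hcnn : 0 ≤ c := div_nonneg (pow_nonneg hα.le _) (Nat.cast_nonneg _)
      have hgint : IntervalIntegrable (fun u => c * (τ - u) ^ k) volume 0 m :=
        (by fun_prop : Continuous fun u : ℝ => c * (τ - u) ^ k).intervalIntegrable _ _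
      have hI1 : (∫ u in (0:ℝ)..m, P k (τ - u)) ≤ ∫ u in (0:ℝ)..m, c * (τ - u) ^ k := by
        apply integral_mono_on hm0 h1 hgint
        intro u hu
        have huτ : 0 ≤ τ - u := by have := hu.2; linarith
        have := ih (τ - u) huτ
        rwa [mul_pow, ← div_mul_eq_mul_div, ← hc] at this
      have hcalc : (∫ u in (0:ℝ)..m, c * (τ - u) ^ k)
          = c * ((τ ^ (k + 1) - (τ - m) ^ (k + 1)) / (k + 1)) := by
        rw [intervalIntegral.integral_const_mul, integral_comp_sub_left (fun v => v ^ k) τ]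
        simp [integral_pow]
      have hS : 0 ≤ (τ - m) ^ (k + 1) := pow_nonneg (by linarith) _
      have hfin : α * (c * ((τ ^ (k + 1) - (τ - m) ^ (k + 1)) / (k + 1)))
          ≤ (α * τ) ^ (k + 1) / Nat.factorial (k + 1) := by
        have heq : (α * τ) ^ (k + 1) / (Nat.factorial (k + 1) : ℝ)
            = α * (c * (τ ^ (k + 1) / (k + 1))) := by
          rw [mul_pow, Nat.factorial_succ, hc]
          push_cast
          field_simp
          ring
        rw [heq]
        gcongr
        · linarith
      calc α * ∫ u in (0:ℝ)..1, P k (τ - u)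
          = α * ∫ u in (0:ℝ)..m, P k (τ - u) := by rw [hsplit, hI2, add_zero]
        _ ≤ α * (c * ((τ ^ (k + 1) - (τ - m) ^ (k + 1)) / (k + 1))) := by
            rw [← hcalc]; exact mul_le_mul_of_nonneg_left hI1 hα.le
        _ ≤ _ := hfin
    · rw [integral_undef h, mul_zero]
      exact hbnn
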